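/- Let W : [0,T] → ℝ be continuous and let 0 < x < y. Suppose X, Y : [0,T] → ℝ solve X' = 2/(X - W), Y' = 2/(Y - W) with X(0)=x, Y(0)=y and W(t) < X(t) < Y(t) on [0,T], and suppose P, Q : [0,T] → (0,∞) solve P'(t) = -2P(t)/(X(t)-W(t))², Q'(t) = -2Q(t)/(Y(t)-W(t))², with P(0) = Q(0) = 1. Define J(t) = P(t)Q(t)/(Y(t)-X(t))². Then J satisfies J'(t) = -2J(t) · (1/(X(t)-W(t)) - 1/(Y(t)-W(t)))², and consequently J is nonincreasing on [0,T], so J(t) ≤ J(0) = 1/(y-x)² for all t. -/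

import Mathlib

/-- Monotonicity of the boundary Poisson-kernel quantity
`J = P Q / (Y - X)²` along the chordal Loewner flow:
`J' = -2J (1/(X-W) - 1/(Y-W))²`, so `J` is nonincreasing and
`J(t) ≤ J(0) = 1/(y-x)²`. -/
theorem loewner_poisson_kernel_decreasing (T : ℝ) (hT : 0 ≤ T)
    (W X Y P Q : ℝ → ℝ) (x y : ℝ) (hx : 0 < x) (hxy : x < y)
    (hW : ContinuousOn W (Set.Icc 0 T))
    (hX : ∀ t ∈ Set.Icc (0 : ℝ) T, HasDerivAt X (2 / (X t - W t)) t)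
    (hY : ∀ t ∈ Set.Icc (0 : ℝ) T, HasDerivAt Y (2 / (Y t - W t)) t)
    (hX0 : X 0 = x) (hY0 : Y 0 = y)
    (hord : ∀ t ∈ Set.Icc (0 : ℝ) T, W t < X t ∧ X t < Y t)
    (hPpos : ∀ t ∈ Set.Icc (0 : ℝ) T, 0 < P t)
    (hQpos : ∀ t ∈ Set.Icc (0 : ℝ) T, 0 < Q t)
    (hP : ∀ t ∈ Set.Icc (0 : ℝ) T,
      HasDerivAt P (-2 * P t / (X t - W t) ^ 2) t)
    (hQ : ∀ t ∈ Set.Icc (0 : ℝ) T,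
      HasDerivAt Q (-2 * Q t / (Y t - W t) ^ 2) t)
    (hP0 : P 0 = 1) (hQ0 : Q 0 = 1) :
    (∀ t ∈ Set.Icc (0 : ℝ) T,
      HasDerivAt (fun s => P s * Q s / (Y s - X s) ^ 2)
        (-2 * (P t * Q t / (Y t - X t) ^ 2) *
          (1 / (X t - W t) - 1 / (Y t - W t)) ^ 2) t) ∧
    (∀ s ∈ Set.Icc (0 : ℝ) T, ∀ t ∈ Set.Icc (0 : ℝ) T, s ≤ t →
      P t * Q t / (Y t - X t) ^ 2 ≤ P s * Q s / (Y s - X s) ^ 2) ∧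
    (∀ t ∈ Set.Icc (0 : ℝ) T,
      P t * Q t / (Y t - X t) ^ 2 ≤ 1 / (y - x) ^ 2) := by
  have hderiv : ∀ t ∈ Set.Icc (0 : ℝ) T,
      HasDerivAt (fun s => P s * Q s / (Y s - X s) ^ 2)
        (-2 * (P t * Q t / (Y t - X t) ^ 2) *
          (1 / (X t - W t) - 1 / (Y t - W t)) ^ 2) t := by
    intro t ht
    obtain ⟨h1, h2⟩ := hord t ht
    have hXW : X t - W t ≠ 0 := sub_ne_zero.2 (ne_of_gt h1)
    have hYW : Y t - W t ≠ 0 := sub_ne_zero.2 (ne_of_gt (h1.trans h2))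
    have hYX : Y t - X t ≠ 0 := sub_ne_zero.2 (ne_of_gt h2)
    have hu : HasDerivAt (fun s => P s * Q s)
        ((-2 * P t / (X t - W t) ^ 2) * Q t + P t * (-2 * Q t / (Y t - W t) ^ 2)) t :=
      (hP t ht).mul (hQ t ht)
    have hD : HasDerivAt (fun s => Y s - X s)
        (2 / (Y t - W t) - 2 / (X t - W t)) t := (hY t ht).sub (hX t ht)
    have hD2 : HasDerivAt (fun s => (Y s - X s) ^ 2)
        (2 * (Y t - X t) ^ 1 * (2 / (Y t - W t) - 2 / (X t - W t))) t := hD.pow 2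
    have h : HasDerivAt (fun s => P s * Q s / (Y s - X s) ^ 2) _ t := hu.div hD2 (pow_ne_zero 2 hYX)
    convert h using 1
    field_simp
    ring
  refine ⟨hderiv, ?_, ?_⟩
  · have hanti : AntitoneOn (fun s => P s * Q s / (Y s - X s) ^ 2) (Set.Icc 0 T) := by
      apply antitoneOn_of_deriv_nonpos (convex_Icc 0 T)
      · intro t ht
        exact (hderiv t ht).continuousAt.continuousWithinAt
      · intro t ht
        rw [interior_Icc] at ht
        exact ((hderiv t (Set.Ioo_subset_Icc_self ht)).differentiableAt).differentiableWithinAt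
      · intro t ht
        rw [interior_Icc] at ht
        have ht' := Set.Ioo_subset_Icc_self ht
        rw [(hderiv t ht').deriv]
        have hJ : 0 ≤ P t * Q t / (Y t - X t) ^ 2 :=
          div_nonneg (mul_nonneg (hPpos t ht').le (hQpos t ht').le) (sq_nonneg _)
        nlinarith [sq_nonneg (1 / (X t - W t) - 1 / (Y t - W t))]
    exact fun s hs t ht hst => hanti hs ht hst
  · intro t ht
    have h0 : (0 : ℝ) ∈ Set.Icc (0 : ℝ) T := ⟨le_refl 0, hT⟩
    have hanti : AntitoneOn (fun s => P s * Q s / (Y s - X s) ^ 2) (Set.Icc 0 T) := by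
      apply antitoneOn_of_deriv_nonpos (convex_Icc 0 T)
      · intro t ht
        exact (hderiv t ht).continuousAt.continuousWithinAt
      · intro t ht
        rw [interior_Icc] at ht
        exact ((hderiv t (Set.Ioo_subset_Icc_self ht)).differentiableAt).differentiableWithinAt
      · intro t ht
        rw [interior_Icc] at ht
        have ht' := Set.Ioo_subset_Icc_self ht
        rw [(hderiv t ht').deriv]
        have hJ : 0 ≤ P t * Q t / (Y t - X t) ^ 2 :=
          div_nonneg (mul_nonneg (hPpos t ht').le (hQpos t ht').le) (sq_nonneg _)
        nlinarith [sq_nonneg (1 / (X t - W t) - 1 / (Y t - W t))]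
    have := hanti h0 ht ht.1
    simpa [hP0, hQ0, hX0, hY0] using this
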